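/- If the index poset I is wqo and each poset P_i (i ∈ I, each with least element 0_i) is wqo, then the Dress–Schiffels product ⊗^{DS}_{i∈I} P_i is wqo. -/

import Mathlib

universe u v

open Set

/-- `r` is an initial segment of `X ⊆ ℕ`: `r ⊆ X` and every element of `X` not in `r`
is greater than every element of `r`. -/
def NatInitSeg (r : Finset ℕ) (X : Set ℕ) : Prop :=
  ↑r ⊆ X ∧ ∀ x ∈ X, x ∉ r → ∀ y ∈ r, y < x

/-- `B` is a barrier: an infinite inclusion-antichain of finite subsets of `ℕ` such that
every infinite subset of the base has an initial segment in `B`. -/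
def IsBarrier (B : Set (Finset ℕ)) : Prop :=
  B.Infinite ∧
  (∀ x ∈ B, ∀ y ∈ B, x ⊆ y → x = y) ∧
  (∀ X : Set ℕ, X ⊆ (⋃ b ∈ B, (↑b : Set ℕ)) → X.Infinite → ∃ r ∈ B, NatInitSeg r X)

/-- `t` is a proper initial segment of the finite set `s`. -/
def FinsetProperInitSeg (t s : Finset ℕ) : Prop :=
  t ⊆ s ∧ t ≠ s ∧ ∀ x ∈ s, x ∉ t → ∀ y ∈ t, y < x

/-- The shift-extension relation `r ◁ s`: `min r < min s` and `r \ {min r}` is a proper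
initial segment of `s`. -/
def ShiftExt (r s : Finset ℕ) : Prop :=
  ∃ m ∈ r, (∀ x ∈ r, m ≤ x) ∧ (∀ y ∈ s, m < y) ∧ FinsetProperInitSeg (r.erase m) s

/-- A map `f` from a barrier `B` into `X` is good for the relation `le`. -/
def GoodOn {X : Type*} (le : X → X → Prop) (B : Set (Finset ℕ)) (f : Finset ℕ → X) : Prop :=
  ∃ s ∈ B, ∃ t ∈ B, ShiftExt s t ∧ le (f s) (f t)

/-- Well quasi-order for a relation: every `ℕ`-sequence is good. -/
def IsWqoRel {X : Type*} (le : X → X → Prop) : Prop :=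
  ∀ p : ℕ → X, ∃ i j : ℕ, i < j ∧ le (p i) (p j)

/-- Better quasi-order: every map from every barrier is good. -/
def IsBqoRel {X : Type*} (le : X → X → Prop) : Prop :=
  ∀ B : Set (Finset ℕ), IsBarrier B → ∀ f : Finset ℕ → X, GoodOn le B f

/-- The (strict) lexicographic order on finite subsets of `ℕ`:
`r < s` iff `r ≠ s` and the least element of the symmetric difference belongs to `r`. -/
def FinsetLexLt (r s : Finset ℕ) : Prop :=
  r ≠ s ∧ ∀ m ∈ symmDiff r s, (∀ x ∈ symmDiff r s, m ≤ x) → m ∈ r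

/-- The barrier `B` has lexicographic order type `≤ α`: there is a lex-strictly-increasing
ordinal-valued function on `B` bounded by `α`. -/
def BarrierTypeLE (B : Set (Finset ℕ)) (α : Ordinal.{0}) : Prop :=
  ∃ g : Finset ℕ → Ordinal.{0}, (∀ b ∈ B, g b < α) ∧
    ∀ b₁ ∈ B, ∀ b₂ ∈ B, FinsetLexLt b₁ b₂ → g b₁ < g b₂

/-- `α`-wqo: every map from a barrier of order type `≤ α` is good. -/
def IsAlphaWqoRel {X : Type*} (le : X → X → Prop) (α : Ordinal.{0}) : Prop :=
  ∀ B : Set (Finset ℕ), IsBarrier B → BarrierTypeLE B α →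
    ∀ f : Finset ℕ → X, GoodOn le B f

/-- `σ`-bqo: a wqo which is a countable union of sets, each bqo in the induced order. -/
def IsSigmaBqoRel {X : Type*} (le : X → X → Prop) : Prop :=
  IsWqoRel le ∧
  ∃ S : ℕ → Set X, (⋃ n, S n) = Set.univ ∧
    ∀ n, IsBqoRel (fun x y : S n => le x.1 y.1)

/-- Sequences of length `α` from `P`. -/
abbrev OrdSeq (P : Type u) (α : Ordinal.{0}) := {β : Ordinal.{0} // β < α} → P

/-- The embeddability quasi-order on `P^α`. -/
def OrdSeqLE {P : Type u} [Preorder P] {α : Ordinal.{0}} (f g : OrdSeq P α) : Prop :=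
  ∃ ρ : {β : Ordinal.{0} // β < α} → {β : Ordinal.{0} // β < α},
    StrictMono ρ ∧ ∀ γ, f γ ≤ g (ρ γ)

/-- Sequences of length `< α` from `P`. -/
abbrev OrdSeqLt (P : Type u) (α : Ordinal.{0}) :=
  Σ β : {β : Ordinal.{0} // β < α}, ({γ : Ordinal.{0} // γ < β.1} → P)

/-- The embeddability quasi-order on `P^{<α}`. -/
def OrdSeqLtLE {P : Type u} [Preorder P] {α : Ordinal.{0}} (f g : OrdSeqLt P α) : Prop :=
  ∃ ρ : {γ : Ordinal.{0} // γ < f.1.1} → {γ : Ordinal.{0} // γ < g.1.1},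
    StrictMono ρ ∧ ∀ δ, f.2 δ ≤ g.2 (ρ δ)

/-- The Dress–Schiffels relation: `f ≤DS g` iff `f i < g i` for every `i` maximal in
`Δ(f,g) = {j | f j ≠ g j}`. -/
def DSle {I : Type u} [PartialOrder I] {P : I → Type v} [∀ i, PartialOrder (P i)]
    (f g : ∀ i, P i) : Prop :=
  ∀ i : I, Maximal (fun j => f j ≠ g j) i → f i < g i

/-- The underlying set of the Dress–Schiffels product: finitely supported functions. -/
abbrev DSProd (I : Type u) [PartialOrder I] (P : I → Type v) [∀ i, PartialOrder (P i)]
    [∀ i, OrderBot (P i)] :=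
  {f : ∀ i, P i // {i | f i ≠ ⊥}.Finite}

section DSAux

variable {I : Type u} [PartialOrder I] {P : I → Type v} [∀ i, PartialOrder (P i)]
  [∀ i, OrderBot (P i)]

lemma dsle_refl (f : ∀ i, P i) : DSle f f := fun _ hi => absurd rfl hi.1

lemma dsle_of_bot {f g : ∀ i, P i} (hf : ∀ i, f i = ⊥) : DSle f g := by
  intro i hi
  have h1 : f i ≠ g i := hi.1
  rw [hf i] at h1 ⊢
  exact bot_lt_iff_ne_bot.2 (Ne.symm h1)

lemma dsle_update_bot_left [DecidableEq I] (g : ∀ i, P i) (i : I) (hgi : g i ≠ ⊥) :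
    DSle (Function.update g i ⊥) g := by
  intro j hj
  have hne : Function.update g i ⊥ j ≠ g j := hj.1
  by_cases hji : j = i
  · subst hji
    rw [Function.update_self]
    exact bot_lt_iff_ne_bot.2 hgi
  · rw [Function.update_of_ne hji] at hne
    exact absurd rfl hne

lemma dsle_trans {f g h : ∀ i, P i}
    (hfg : {i | f i ≠ g i}.Finite) (hgh : {i | g i ≠ h i}.Finite)
    (h1 : DSle f g) (h2 : DSle g h) : DSle f h := by
  intro i hi
  have hiD : i ∈ {j | f j ≠ g j} ∪ {j | g j ≠ h j} := by
    by_contra hc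
    simp only [Set.mem_union, Set.mem_setOf_eq, not_or, not_not] at hc
    exact hi.1 (hc.1.trans hc.2)
  obtain ⟨j, hij, hjmax⟩ := (hfg.union hgh).exists_le_maximal hiD
  have hfh : f j < h j := by
    by_cases hfgj : f j = g j
    · have hghj : g j ≠ h j := by
        rcases hjmax.1 with hx | hx
        · exact absurd hfgj hx
        · exact hx
      have hm : Maximal (fun k => g k ≠ h k) j :=
        ⟨hghj, fun k hk hjk => hjmax.2 (Set.mem_union_right _ hk) hjk⟩
      rw [hfgj]
      exact h2 j hm
    · have hm : Maximal (fun k => f k ≠ g k) j :=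
        ⟨hfgj, fun k hk hjk => hjmax.2 (Set.mem_union_left _ hk) hjk⟩
      have hlt1 := h1 j hm
      by_cases hghj : g j = h j
      · rwa [hghj] at hlt1
      · have hm2 : Maximal (fun k => g k ≠ h k) j :=
          ⟨hghj, fun k hk hjk => hjmax.2 (Set.mem_union_right _ hk) hjk⟩
        exact hlt1.trans (h2 j hm2)
  have hji : j ≤ i := hi.2 hfh.ne hij
  have hij' : i = j := le_antisymm hij hji
  rwa [hij']

lemma dsle_update_update [DecidableEq I] {f g : ∀ i, P i} (i : I)
    (hle : f i ≤ g i)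
    (h : DSle (Function.update f i ⊥) (Function.update g i ⊥)) : DSle f g := by
  intro j hj
  by_cases hji : j = i
  · subst hji; exact lt_of_le_of_ne hle hj.1
  · have hj' : Maximal (fun k => Function.update f i ⊥ k ≠ Function.update g i ⊥ k) j := by
      constructor
      · show Function.update f i ⊥ j ≠ Function.update g i ⊥ j
        rw [Function.update_of_ne hji, Function.update_of_ne hji]; exact hj.1
      · intro k hk hjk
        by_cases hki : k = i
        · subst hki; simp only [Function.update_self, ne_eq, not_true_eq_false] at hk
        · rw [Function.update_of_ne hki, Function.update_of_ne hki] at hk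
          exact hj.2 hk hjk
    have := h j hj'
    rwa [Function.update_of_ne hji, Function.update_of_ne hji] at this

lemma dsle_update_update' [DecidableEq I] {f g : ∀ i, P i} {i i' : I}
    (hii' : i < i') (hfi' : f i' = ⊥) (hgi' : g i' ≠ ⊥)
    (h : DSle (Function.update f i ⊥) (Function.update g i' ⊥)) : DSle f g := by
  have hi'i : i' ≠ i := fun e => absurd (e ▸ hii') (lt_irrefl i')
  have hΔi' : f i' ≠ g i' := by rw [hfi']; exact fun e => hgi' e.symm
  intro j hj
  by_cases hji' : j = i'
  · subst hji'; rw [hfi']; exact bot_lt_iff_ne_bot.2 hgi'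
  · have hji : j ≠ i := by
      rintro rfl
      exact absurd (hj.2 hΔi' hii'.le) (not_le_of_gt hii')
    have hj' : Maximal
        (fun k => Function.update f i ⊥ k ≠ Function.update g i' ⊥ k) j := by
      constructor
      · show Function.update f i ⊥ j ≠ Function.update g i' ⊥ j
        rw [Function.update_of_ne hji, Function.update_of_ne hji']; exact hj.1
      · intro k hk hjk
        by_cases hki : k = i
        · subst hki
          exact absurd (hj.2 hΔi' (hjk.trans hii'.le))
            (not_le_of_gt (lt_of_le_of_lt hjk hii'))
        · by_cases hki' : k = i'
          · subst hki'
            exfalso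
            apply hk
            rw [Function.update_of_ne hi'i, Function.update_self, hfi']
          · rw [Function.update_of_ne hki, Function.update_of_ne hki'] at hk
            exact hj.2 hk hjk
    have := h j hj'
    rwa [Function.update_of_ne hji, Function.update_of_ne hji'] at this

end DSAux

/-- If `I` is wqo and every `P i` is wqo, then the Dress–Schiffels product is wqo. -/
theorem stmt_9 {I : Type u} [PartialOrder I] {P : I → Type v} [∀ i, PartialOrder (P i)]
    [∀ i, OrderBot (P i)]
    (hI : IsWqoRel ((· ≤ ·) : I → I → Prop))
    (hP : ∀ i, IsWqoRel ((· ≤ ·) : P i → P i → Prop)) :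
    IsWqoRel (fun f g : DSProd I P => DSle f.1 g.1) := by
  classical
  intro p
  by_contra hgood
  push_neg at hgood
  set R : DSProd I P → DSProd I P → Prop := fun f g => DSle f.1 g.1 with hRdef
  have hdiff : ∀ x y : DSProd I P, {i | x.1 i ≠ y.1 i}.Finite := by
    intro x y
    apply (x.2.union y.2).subset
    intro i hi
    by_contra hc
    simp only [Set.mem_union, Set.mem_setOf_eq, not_or, not_not] at hc
    exact hi (hc.1.trans hc.2.symm)
  have hbad : ∃ f, Set.PartiallyWellOrderedOn.IsBadSeq R Set.univ f :=
    ⟨p, fun _ => Set.mem_univ _, fun m n hmn => hgood m n hmn⟩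
  obtain ⟨f, hf, hmin⟩ := Set.PartiallyWellOrderedOn.exists_min_bad_of_exists_bad R
    (fun x => x.2.toFinset.card) Set.univ hbad
  -- every support is nonempty
  have hne : ∀ n, {i | (f n).1 i ≠ ⊥}.Nonempty := by
    intro n
    rcases Set.eq_empty_or_nonempty {i | (f n).1 i ≠ ⊥} with he | h
    · exfalso
      rw [Set.eq_empty_iff_forall_notMem] at he
      exact hf.2 n (n + 1) (Nat.lt_succ_self n)
        (dsle_of_bot fun i => not_not.1 (he i))
    · exact h
  -- choose maximal support elements
  have hmaxex : ∀ n, ∃ a, Maximal (· ∈ {i | (f n).1 i ≠ ⊥}) a := by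
    intro n
    obtain ⟨a, ha⟩ := hne n
    obtain ⟨b, _, hb⟩ := (f n).2.exists_le_maximal ha
    exact ⟨b, hb⟩
  choose i hi using hmaxex
  have hisupp : ∀ n, (f n).1 (i n) ≠ ⊥ := fun n => (hi n).1
  -- the truncated sequence
  let r : ℕ → DSProd I P := fun n =>
    ⟨Function.update (f n).1 (i n) ⊥, (f n).2.subset (by
      intro j hj
      simp only [Set.mem_setOf_eq] at hj ⊢
      by_cases hji : j = i n
      · subst hji; rw [Function.update_self] at hj; exact absurd rfl hj
      · rwa [Function.update_of_ne hji] at hj)⟩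
  have hr1 : ∀ n, (r n).1 = Function.update (f n).1 (i n) ⊥ := fun n => rfl
  have hrle : ∀ n, R (r n) (f n) := by
    intro n
    show DSle (r n).1 (f n).1
    rw [hr1]
    exact dsle_update_bot_left (f n).1 (i n) (hisupp n)
  have hrk : ∀ n, (r n).2.toFinset.card < (f n).2.toFinset.card := by
    intro n
    apply Finset.card_lt_card
    rw [Finset.ssubset_iff_of_subset]
    · refine ⟨i n, ?_, ?_⟩
      · rw [Set.Finite.mem_toFinset]; exact hisupp n
      · rw [Set.Finite.mem_toFinset]
        simp only [Set.mem_setOf_eq, hr1, Function.update_self, ne_eq, not_not]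
    · intro j hj
      rw [Set.Finite.mem_toFinset] at hj ⊢
      by_cases hji : j = i n
      · exfalso
        rw [Set.mem_setOf_eq, hr1, hji, Function.update_self] at hj
        exact hj rfl
      · rw [Set.mem_setOf_eq, hr1, Function.update_of_ne hji] at hj
        exact hj
  -- key: along every strictly monotone subsequence, r is good
  have key : ∀ φ : ℕ → ℕ, StrictMono φ → ∃ k l, k < l ∧ R (r (φ k)) (r (φ l)) := by
    intro φ hφ
    by_contra hb
    push_neg at hb
    set n0 := φ 0 with hn0
    set G : ℕ → DSProd I P := fun m => if m < n0 then f m else r (φ (m - n0)) with hG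
    have hGeval : ∀ m, G m = if m < n0 then f m else r (φ (m - n0)) := fun m => rfl
    refine hmin n0 G ?_ ?_ ?_
    · intro m hm; rw [hGeval m, if_pos hm]
    · show (G n0).2.toFinset.card < (f n0).2.toFinset.card
      rw [hGeval n0, if_neg (lt_irrefl n0), Nat.sub_self, ← hn0]
      exact hrk n0
    · constructor
      · intro m; exact Set.mem_univ _
      · intro a b hab
        show ¬ R (G a) (G b)
        rw [hGeval a, hGeval b]
        by_cases hbn : b < n0
        · rw [if_pos hbn, if_pos (hab.trans hbn)]
          exact hf.2 a b hab
        · push_neg at hbn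
          rw [if_neg (not_lt.2 hbn)]
          by_cases han : a < n0
          · rw [if_pos han]
            intro hR'
            have h2 : R (f a) (f (φ (b - n0))) :=
              dsle_trans (hdiff _ _) (hdiff _ _) hR' (hrle (φ (b - n0)))
            exact hf.2 a (φ (b - n0))
              (lt_of_lt_of_le han (hn0 ▸ hφ.monotone (Nat.zero_le _))) h2
          · push_neg at han
            rw [if_neg (not_lt.2 han)]
            exact hb (a - n0) (b - n0) (by omega)
  -- monotone subsequence of the maximal indices
  have hIpwo : (Set.univ : Set I).PartiallyWellOrderedOn (· ≤ ·) := fun q => hI (fun n => (q n).1)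
  obtain ⟨g, hg⟩ := hIpwo.exists_monotone_subseq (f := i) (fun _ => Set.mem_univ _)
  by_cases hconst : ∃ k, {l | i (g l) = i (g k)}.Infinite
  · -- constant case
    obtain ⟨k0, hk0⟩ := hconst
    set io := i (g k0) with hio
    set p1 : ℕ → ℕ := fun m => Nat.nth (fun l => i (g l) = io) m with hp1
    have hmem : ∀ m, i (g (p1 m)) = io := fun m => Nat.nth_mem_of_infinite hk0 m
    have hp1mono : StrictMono p1 := Nat.nth_strictMono hk0
    have hPpwo : (Set.univ : Set (P io)).PartiallyWellOrderedOn (· ≤ ·) :=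
      fun q => hP io (fun n => (q n).1)
    obtain ⟨ψ, hψ⟩ := hPpwo.exists_monotone_subseq
      (f := fun m => (f (g (p1 m))).1 io) (fun _ => Set.mem_univ _)
    obtain ⟨k, l, hkl, hRkl⟩ := key (fun m => g (p1 (ψ m)))
      (g.strictMono.comp (hp1mono.comp ψ.strictMono))
    set a := g (p1 (ψ k)) with ha
    set b := g (p1 (ψ l)) with hbb
    have hia : i a = io := hmem (ψ k)
    have hib : i b = io := hmem (ψ l)
    have hupd : DSle (Function.update (f a).1 (i a) ⊥)
        (Function.update (f b).1 (i b) ⊥) := hRkl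
    rw [hia, hib] at hupd
    have hfab : DSle (f a).1 (f b).1 :=
      dsle_update_update io (hψ k l hkl.le) hupd
    exact hf.2 a b (g.strictMono (hp1mono (ψ.strictMono hkl))) hfab
  · -- strictly increasing case
    push_neg at hconst
    have hfinfib : ∀ v : I, {l | i (g l) = v}.Finite := by
      intro v
      by_cases hv : ∃ k, i (g k) = v
      · obtain ⟨k, rfl⟩ := hv
        exact hconst k
      · convert Set.finite_empty
        rw [Set.eq_empty_iff_forall_notMem]
        intro l hl
        exact hv ⟨l, hl⟩
    set E : ℕ → Set I := fun n =>
      (⋃ a ∈ Set.Iic n, {i (g a)}) ∪ ⋃ a ∈ Set.Iic n, {v | (f (g a)).1 v ≠ ⊥} with hE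
    have hEfin : ∀ n, (E n).Finite := fun n =>
      (((Set.finite_Iic n).biUnion fun a _ => Set.finite_singleton _).union
        ((Set.finite_Iic n).biUnion fun a _ => (f (g a)).2))
    have hEmono : ∀ {m n : ℕ}, m ≤ n → E m ⊆ E n := by
      intro m n hmn
      apply Set.union_subset_union <;>
        exact Set.biUnion_subset_biUnion_left (Set.Iic_subset_Iic.2 hmn)
    have hstep : ∀ n, ∃ l, n < l ∧ i (g l) ∉ E n := by
      intro n
      have hT : {l | i (g l) ∈ E n}.Finite := by
        apply ((hEfin n).biUnion fun v _ => hfinfib v).subset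
        intro l hl
        exact Set.mem_biUnion hl rfl
      obtain ⟨l, hl⟩ := (hT.union (Set.finite_Iic n)).infinite_compl.nonempty
      simp only [Set.mem_compl_iff, Set.mem_union, Set.mem_setOf_eq, Set.mem_Iic,
        not_or, not_le] at hl
      exact ⟨l, hl.2, hl.1⟩
    choose nxt hnxt1 hnxt2 using hstep
    set ψ : ℕ → ℕ := fun m => Nat.rec 0 (fun _ prev => nxt prev) m with hψdef
    have hψsucc : ∀ m, ψ (m + 1) = nxt (ψ m) := fun m => rfl
    have hψmono : StrictMono ψ :=
      strictMono_nat_of_lt_succ fun n => by rw [hψsucc]; exact hnxt1 (ψ n)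
    have hnotinE : ∀ a b : ℕ, a < b → i (g (ψ b)) ∉ E (ψ a) := by
      intro a b hab hmem'
      obtain ⟨c, rfl⟩ : ∃ c, b = c + 1 := ⟨b - 1, by omega⟩
      have h1 : i (g (ψ (c + 1))) ∉ E (ψ c) := by
        rw [hψsucc]; exact hnxt2 (ψ c)
      exact h1 (hEmono (hψmono.monotone (by omega : a ≤ c)) hmem')
    obtain ⟨k, l, hkl, hRkl⟩ := key (fun m => g (ψ m)) (g.strictMono.comp hψmono)
    set a := g (ψ k) with haa
    set b := g (ψ l) with hbb
    have hselfE : i a ∈ E (ψ k) :=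
      Set.mem_union_left _ (Set.mem_biUnion (Set.mem_Iic.2 le_rfl) rfl)
    have hne' : i a ≠ i b := fun he => hnotinE k l hkl (he ▸ hselfE)
    have hlt : i a < i b :=
      lt_of_le_of_ne (hg (ψ k) (ψ l) (hψmono.monotone hkl.le)) hne'
    have hsupp : (f a).1 (i b) = ⊥ := by
      by_contra hc
      exact hnotinE k l hkl
        (Set.mem_union_right _ (Set.mem_biUnion (Set.mem_Iic.2 le_rfl) hc))
    have hupd : DSle (Function.update (f a).1 (i a) ⊥)
        (Function.update (f b).1 (i b) ⊥) := hRkl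
    have hfab : DSle (f a).1 (f b).1 :=
      dsle_update_update' hlt hsupp (hisupp b) hupd
    exact hf.2 a b (g.strictMono (hψmono hkl)) hfab
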